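/- Let p ≥ 2 be an integer, I ⊆ {0,1,...,p−1}, n ≥ 2, and let k = a_1·p^{n−1} + a_2·p^{n−2} + ... + a_n with 0 ≤ a_i ≤ p−1. If a_1 ∈ I, then k ∈ I_{p^n} if and only if a_2·p^{n−2} + ... + a_n ∈ I_{p^{n−1}}. If a_1 ∉ I, then k ∈ I_{p^n} if and only if (p−1−a_2)·p^{n−2} + ... + (p−1−a_n) ∉ I_{p^{n−1}}. -/

import Mathlib

/-- The (not necessarily continuous) piecewise linear map `g_{p,I} : [0,1] → [0,1]`:
on `[k/p, (k+1)/p)` it is `x ↦ p·x − k` if `k ∈ I` and `x ↦ k + 1 − p·x` if `k ∉ I`,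
with `g_{p,I}(1) = 1` if `p − 1 ∈ I` and `g_{p,I}(1) = 0` otherwise. -/
noncomputable def gpI (p : ℕ) (I : Finset ℕ) (x : ℝ) : ℝ :=
  if x = 1 then (if p - 1 ∈ I then 1 else 0)
  else if (⌊(p : ℝ) * x⌋).toNat ∈ I then (p : ℝ) * x - (⌊(p : ℝ) * x⌋).toNat
  else ((⌊(p : ℝ) * x⌋).toNat : ℝ) + 1 - (p : ℝ) * x

/-- `I_{p^n}` is the set of indices `k < p^n` such that the `n`-fold iterate of `g_{p,I}`
is increasing on `(k/p^n, (k+1)/p^n)`, where it is given by `x ↦ p^n·x − k`. -/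
def ISet (p : ℕ) (I : Finset ℕ) (n : ℕ) : Set ℕ :=
  {k | k < p ^ n ∧ ∀ x ∈ Set.Ioo ((k : ℝ) / (p : ℝ) ^ n) (((k : ℝ) + 1) / (p : ℝ) ^ n),
    (gpI p I)^[n] x = (p : ℝ) ^ n * x - (k : ℝ)}

def FP (p : ℕ) (I : Finset ℕ) (n k : ℕ) : Prop :=
  ∀ x ∈ Set.Ioo ((k : ℝ) / (p : ℝ) ^ n) (((k : ℝ) + 1) / (p : ℝ) ^ n),
    (gpI p I)^[n] x = (p : ℝ) ^ n * x - (k : ℝ)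

def GP (p : ℕ) (I : Finset ℕ) (n k : ℕ) : Prop :=
  ∀ x ∈ Set.Ioo ((k : ℝ) / (p : ℝ) ^ n) (((k : ℝ) + 1) / (p : ℝ) ^ n),
    (gpI p I)^[n] x = ((k : ℝ) + 1) - (p : ℝ) ^ n * x

lemma gpI_eq_of (p a : ℕ) (I : Finset ℕ) (x : ℝ) (h1 : x < 1)
    (h2 : (a:ℝ) ≤ (p:ℝ) * x) (h3 : (p:ℝ) * x < (a:ℝ) + 1) :
    gpI p I x = if a ∈ I then (p:ℝ) * x - a else (a:ℝ) + 1 - (p:ℝ) * x := by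
  have hfl : ⌊(p:ℝ) * x⌋ = (a : ℤ) := by
    rw [Int.floor_eq_iff]
    constructor
    · exact_mod_cast h2
    · push_cast; exact h3
  have ht : (⌊(p:ℝ) * x⌋).toNat = a := by rw [hfl]; exact Int.toNat_natCast a
  unfold gpI
  rw [if_neg h1.ne, ht]

lemma geom_nat (p : ℕ) (hp : 1 ≤ p) : ∀ t, (p-1) * (∑ j ∈ Finset.range t, p^j) + 1 = p^t := by
  intro t
  induction t with
  | zero => simp
  | succ t ih =>
    rw [Finset.sum_range_succ, Nat.mul_add]
    have h1 : 1 + (p-1) = p := by omega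
    calc (p-1) * (∑ j ∈ Finset.range t, p^j) + (p-1)*p^t + 1
        = (p^t + (p-1)*p^t) := by omega
      _ = (1 + (p-1)) * p^t := by ring
      _ = p^(t+1) := by rw [h1]; ring

lemma sum_pow_eq (p n : ℕ) (hn : 2 ≤ n) :
    ∑ i ∈ Finset.Icc 2 n, p ^ (n - i) = ∑ j ∈ Finset.range (n-1), p ^ j := by
  apply Finset.sum_bij' (fun i _ => n - i) (fun j _ => n - j)
  · intro i hi; simp only [Finset.mem_Icc] at hi; simp only [Finset.mem_range]; omega
  · intro j hj; simp only [Finset.mem_range] at hj; simp only [Finset.mem_Icc]; omega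
  · intro i hi; simp only [Finset.mem_Icc] at hi; omega
  · intro j hj; simp only [Finset.mem_range] at hj; omega
  · intro i hi; rfl

lemma step_lemma (p N a m m' : ℕ) (I : Finset ℕ) (hp : 2 ≤ p) (ha : a < p)
    (hm : m + 1 ≤ p ^ N) (hm' : m' + (m + 1) = p ^ N) :
    (a ∈ I → (FP p I N m → FP p I (N+1) (a*p^N+m)) ∧ (GP p I N m → GP p I (N+1) (a*p^N+m))) ∧
    (a ∉ I → (GP p I N m' → FP p I (N+1) (a*p^N+m)) ∧ (FP p I N m' → GP p I (N+1) (a*p^N+m))) := by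
  have hp0 : (0:ℝ) < p := by positivity
  have hP : (0:ℝ) < (p:ℝ)^N := by positivity
  have hPp : (0:ℝ) < (p:ℝ)^(N+1) := by positivity
  have hmR : (m:ℝ) + 1 ≤ (p:ℝ)^N := by exact_mod_cast hm
  have haR : (a:ℝ) + 1 ≤ (p:ℝ) := by exact_mod_cast ha
  have hm'R : (m':ℝ) + ((m:ℝ)+1) = (p:ℝ)^N := by exact_mod_cast hm'
  -- common facts for x in the k-interval
  have key : ∀ x, ((a*p^N+m : ℕ) : ℝ) / (p:ℝ)^(N+1) < x →
      x < (((a*p^N+m : ℕ) : ℝ) + 1) / (p:ℝ)^(N+1) →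
      x < 1 ∧ (a:ℝ) ≤ (p:ℝ)*x ∧ (p:ℝ)*x < (a:ℝ)+1 ∧
      (a:ℝ)*(p:ℝ)^N + m < ((p:ℝ)*x) * (p:ℝ)^N ∧
      ((p:ℝ)*x) * (p:ℝ)^N < (a:ℝ)*(p:ℝ)^N + m + 1 := by
    intro x hx1 hx2
    rw [div_lt_iff₀ hPp] at hx1
    rw [lt_div_iff₀ hPp] at hx2
    push_cast at hx1 hx2
    have hpow : x * (p:ℝ)^(N+1) = ((p:ℝ)*x) * (p:ℝ)^N := by ring
    rw [hpow] at hx1 hx2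
    have hu1 : (a:ℝ)*(p:ℝ)^N + m < ((p:ℝ)*x) * (p:ℝ)^N := hx1
    have hu2 : ((p:ℝ)*x) * (p:ℝ)^N < (a:ℝ)*(p:ℝ)^N + m + 1 := hx2
    have hm0 : (0:ℝ) ≤ (m:ℝ) := Nat.cast_nonneg m
    have h3 : (p:ℝ)*x < (a:ℝ)+1 := by nlinarith
    have h2 : (a:ℝ) ≤ (p:ℝ)*x := by nlinarith
    have h1 : x < 1 := by nlinarith
    exact ⟨h1, h2, h3, hu1, hu2⟩
  constructor
  · intro haI
    constructor
    · -- FP m → FP (N+1) k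
      intro hF x hx
      obtain ⟨hx1, hx2⟩ := hx
      obtain ⟨h1, h2, h3, hu1, hu2⟩ := key x hx1 hx2
      rw [Function.iterate_succ_apply, gpI_eq_of p a I x h1 h2 h3, if_pos haI]
      have hy : (p:ℝ)*x - a ∈ Set.Ioo ((m:ℝ)/(p:ℝ)^N) (((m:ℝ)+1)/(p:ℝ)^N) := by
        constructor
        · rw [div_lt_iff₀ hP]; linarith
        · rw [lt_div_iff₀ hP]; linarith
      rw [hF _ hy]
      push_cast
      ring
    · intro hG x hx
      obtain ⟨hx1, hx2⟩ := hx
      obtain ⟨h1, h2, h3, hu1, hu2⟩ := key x hx1 hx2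
      rw [Function.iterate_succ_apply, gpI_eq_of p a I x h1 h2 h3, if_pos haI]
      have hy : (p:ℝ)*x - a ∈ Set.Ioo ((m:ℝ)/(p:ℝ)^N) (((m:ℝ)+1)/(p:ℝ)^N) := by
        constructor
        · rw [div_lt_iff₀ hP]; linarith
        · rw [lt_div_iff₀ hP]; linarith
      rw [hG _ hy]
      push_cast
      ring
  · intro haI
    constructor
    · intro hG x hx
      obtain ⟨hx1, hx2⟩ := hx
      obtain ⟨h1, h2, h3, hu1, hu2⟩ := key x hx1 hx2
      rw [Function.iterate_succ_apply, gpI_eq_of p a I x h1 h2 h3, if_neg haI]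
      have hy : (a:ℝ)+1 - (p:ℝ)*x ∈ Set.Ioo ((m':ℝ)/(p:ℝ)^N) (((m':ℝ)+1)/(p:ℝ)^N) := by
        constructor
        · rw [div_lt_iff₀ hP]; linarith
        · rw [lt_div_iff₀ hP]; linarith
      rw [hG _ hy]
      push_cast
      linear_combination hm'R
    · intro hF x hx
      obtain ⟨hx1, hx2⟩ := hx
      obtain ⟨h1, h2, h3, hu1, hu2⟩ := key x hx1 hx2
      rw [Function.iterate_succ_apply, gpI_eq_of p a I x h1 h2 h3, if_neg haI]
      have hy : (a:ℝ)+1 - (p:ℝ)*x ∈ Set.Ioo ((m':ℝ)/(p:ℝ)^N) (((m':ℝ)+1)/(p:ℝ)^N) := by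
        constructor
        · rw [div_lt_iff₀ hP]; linarith
        · rw [lt_div_iff₀ hP]; linarith
      rw [hF _ hy]
      push_cast
      linear_combination -hm'R

lemma not_both (p N j : ℕ) (I : Finset ℕ) (hp : 2 ≤ p)
    (hF : FP p I N j) (hG : GP p I N j) : False := by
  have hP : (0:ℝ) < (p:ℝ)^N := by positivity
  set x : ℝ := ((j:ℝ) + 1/3) / (p:ℝ)^N with hxdef
  have hx : x ∈ Set.Ioo ((j:ℝ)/(p:ℝ)^N) (((j:ℝ)+1)/(p:ℝ)^N) := by
    constructor
    · rw [div_lt_div_iff₀ hP hP]; nlinarith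
    · rw [div_lt_div_iff₀ hP hP]; nlinarith
  have h1 := hF x hx
  have h2 := hG x hx
  have h3 : (p:ℝ)^N * x = (j:ℝ) + 1/3 := by
    rw [hxdef]; field_simp
  rw [h3] at h1 h2
  rw [h1] at h2
  linarith

lemma dichotomy (p : ℕ) (I : Finset ℕ) (hp : 2 ≤ p) :
    ∀ N, ∀ j, j < p ^ N → FP p I N j ∨ GP p I N j := by
  intro N
  induction N with
  | zero =>
    intro j hj
    have : j = 0 := by simpa using hj
    subst this
    left
    intro x _
    simp
  | succ N ih =>
    intro j hj
    have hp0 : 0 < p ^ N := pow_pos (by omega) N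
    have hm : j % p^N < p ^ N := Nat.mod_lt _ hp0
    have ha : j / p^N < p := by
      rw [Nat.div_lt_iff_lt_mul hp0]
      calc j < p^(N+1) := hj
        _ = p * p^N := by ring
    have hjd : j = (j / p^N) * p^N + j % p^N := by
      have h1 := Nat.div_add_mod j (p^N)
      rw [Nat.mul_comm] at h1
      omega
    obtain ⟨a, m, ha', hm', rfl⟩ : ∃ a m, a < p ∧ m < p ^ N ∧ j = a * p^N + m :=
      ⟨j / p^N, j % p^N, ha, hm, hjd⟩
    obtain ⟨m', hmm'⟩ : ∃ m', m' + (m + 1) = p ^ N := ⟨p^N - 1 - m, by omega⟩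
    have hm'lt : m' < p^N := by omega
    have hstep := step_lemma p N a m m' I hp ha' hm' hmm'
    by_cases haI : a ∈ I
    · rcases ih m hm' with hF | hG
      · exact Or.inl ((hstep.1 haI).1 hF)
      · exact Or.inr ((hstep.1 haI).2 hG)
    · rcases ih m' hm'lt with hF | hG
      · exact Or.inr ((hstep.2 haI).2 hF)
      · exact Or.inl ((hstep.2 haI).1 hG)

lemma ISet_mem_iff (p : ℕ) (I : Finset ℕ) (n k : ℕ) :
    k ∈ ISet p I n ↔ k < p ^ n ∧ FP p I n k := Iff.rfl


/-- Recursive description of `I_{p^n}`: for `k = a_1·p^{n−1} + ⋯ + a_n` with digits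
`0 ≤ a_i ≤ p − 1`, if `a_1 ∈ I` then `k ∈ I_{p^n}` iff `(a_2 … a_n)_p ∈ I_{p^{n−1}}`,
and if `a_1 ∉ I` then `k ∈ I_{p^n}` iff `(c_2 … c_n)_p ∉ I_{p^{n−1}}` where
`c_i = p − 1 − a_i`. -/
theorem ISet_recursion (p n : ℕ) (hp : 2 ≤ p) (hn : 2 ≤ n)
    (I : Finset ℕ) (hI : ∀ i ∈ I, i < p)
    (a : ℕ → ℕ) (ha : ∀ i, 1 ≤ i → i ≤ n → a i < p)
    (k : ℕ) (hk : k = ∑ i ∈ Finset.Icc 1 n, a i * p ^ (n - i)) :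
    (a 1 ∈ I →
      (k ∈ ISet p I n ↔ (∑ i ∈ Finset.Icc 2 n, a i * p ^ (n - i)) ∈ ISet p I (n - 1))) ∧
    (a 1 ∉ I →
      (k ∈ ISet p I n ↔
        (∑ i ∈ Finset.Icc 2 n, (p - 1 - a i) * p ^ (n - i)) ∉ ISet p I (n - 1))) := by
  set m := ∑ i ∈ Finset.Icc 2 n, a i * p ^ (n - i) with hmdef
  set m' := ∑ i ∈ Finset.Icc 2 n, (p - 1 - a i) * p ^ (n - i) with hm'def
  have hp1 : 1 ≤ p := by omega
  -- geometric bound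
  have hgeom : ∑ i ∈ Finset.Icc 2 n, (p - 1) * p ^ (n - i) + 1 = p ^ (n - 1) := by
    rw [← Finset.mul_sum, sum_pow_eq p n hn]
    exact geom_nat p hp1 (n - 1)
  have hma : ∀ i ∈ Finset.Icc 2 n, a i ≤ p - 1 := by
    intro i hi
    simp only [Finset.mem_Icc] at hi
    have := ha i (by omega) hi.2
    omega
  have hm_le : m ≤ ∑ i ∈ Finset.Icc 2 n, (p - 1) * p ^ (n - i) := by
    apply Finset.sum_le_sum
    intro i hi
    exact Nat.mul_le_mul_right _ (hma i hi)
  have hm1 : m + 1 ≤ p ^ (n - 1) := by omega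
  have hsum_add : m' + m = ∑ i ∈ Finset.Icc 2 n, (p - 1) * p ^ (n - i) := by
    rw [hmdef, hm'def, ← Finset.sum_add_distrib]
    apply Finset.sum_congr rfl
    intro i hi
    have h1 := hma i hi
    have : (p - 1 - a i) + a i = p - 1 := by omega
    rw [← Nat.add_mul, this]
  have hmm' : m' + (m + 1) = p ^ (n - 1) := by omega
  have hm'1 : m' < p ^ (n - 1) := by
    have hpos : 0 < p ^ (n - 1) := pow_pos (by omega) _
    omega
  -- k = a 1 * p^(n-1) + m
  have hkd : k = a 1 * p ^ (n - 1) + m := by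
    rw [hk, hmdef]
    have hsplit : Finset.Icc 1 n = insert 1 (Finset.Icc 2 n) := by
      ext x
      simp only [Finset.mem_Icc, Finset.mem_insert]
      omega
    rw [hsplit, Finset.sum_insert (by simp)]
  have ha1 : a 1 < p := ha 1 le_rfl (by omega)
  obtain ⟨N, rfl⟩ : ∃ N, n = N + 1 := ⟨n - 1, by omega⟩
  simp only [Nat.add_sub_cancel] at hm1 hmm' hm'1 hkd ⊢
  have hstep := step_lemma p N (a 1) m m' I hp ha1 hm1 hmm'
  have hklt : a 1 * p ^ N + m < p ^ (N + 1) := by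
    calc a 1 * p ^ N + m < a 1 * p ^ N + p ^ N := by omega
      _ = (a 1 + 1) * p ^ N := by ring
      _ ≤ p * p ^ N := Nat.mul_le_mul_right _ (by omega)
      _ = p ^ (N + 1) := by ring
  rw [hkd]
  constructor
  · intro haI
    rw [ISet_mem_iff, ISet_mem_iff]
    constructor
    · rintro ⟨-, hF⟩
      refine ⟨hm1, ?_⟩
      rcases dichotomy p I hp N m hm1 with h | h
      · exact h
      · exact absurd ((hstep.1 haI).2 h) (fun hG => not_both p (N+1) _ I hp hF hG)
    · rintro ⟨-, hF⟩
      exact ⟨hklt, (hstep.1 haI).1 hF⟩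
  · intro haI
    rw [ISet_mem_iff, ISet_mem_iff]
    constructor
    · rintro ⟨-, hF⟩ ⟨-, hF'⟩
      exact not_both p (N+1) _ I hp hF ((hstep.2 haI).2 hF')
    · intro hnot
      refine ⟨hklt, ?_⟩
      rcases dichotomy p I hp N m' hm'1 with h | h
      · exact absurd ⟨hm'1, h⟩ hnot
      · exact (hstep.2 haI).1 h
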